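/- Suppose the impurity parameters satisfy the Assumption with constants c > 0, γ ∈ (1,2) and function υ(m). Then there exist constants C, C' > 0, depending only on c and γ, such that for all m ≥ 1 and all annuli A = A_{n1,n2}(z) with z ∈ V and 1 ≤ n1 ≤ n2/2: P̄^{(m)}( H̄̄(A) ) ≤ C·(υ(m)/m²)·n1·n2^{γ−1}·m^{2−γ}·e^{−C'·n2/m}, where H̄̄(A) is the event that some hole H_v intersects both the outer boundary of B_{n1}(z) and the inner boundary of B_{n2}(z), does not contain B_{n1}(z), and does not intersect the inner boundary of B_{2n2}(z). -/

import Mathlib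

open MeasureTheory Set Filter Topology
open scoped ENNReal NNReal BigOperators

noncomputable section

/-! ## The triangular lattice `T` -/

/-- A point of the plane (identified with `ℂ`) belonging to the triangular lattice. -/
def TriPt (z : ℂ) : Prop :=
  ∃ x y : ℤ, z = (x : ℂ) + (y : ℂ) * Complex.exp (Complex.I * ((Real.pi : ℂ) / 3))

/-- The vertex set of the triangular lattice. -/
abbrev TriV : Type := {z : ℂ // TriPt z}

/-- The origin `0` of the lattice. -/
def origin : TriV := ⟨0, ⟨0, 0, by push_cast; ring⟩⟩

/-- Adjacency in the triangular lattice: two vertices at Euclidean distance `1`. -/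
def adj (v w : TriV) : Prop := ‖v.1 - w.1‖ = 1

/-- The box `B_n(z) = z + ([-n,n]² ∩ V)`. -/
def BoxAt (z : TriV) (n : ℝ) : Set TriV :=
  {v | |(v.1 - z.1).re| ≤ n ∧ |(v.1 - z.1).im| ≤ n}

/-- The box `B_n = [-n,n]² ∩ V`. -/
def Box (n : ℝ) : Set TriV := BoxAt origin n

/-- The annulus `A_{n₁,n₂}(z) = B_{n₂}(z) \ B_{n₁}(z)`. -/
def AnnAt (z : TriV) (n₁ n₂ : ℝ) : Set TriV := BoxAt z n₂ \ BoxAt z n₁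

/-- The annulus `A_{n₁,n₂} = B_{n₂} \ B_{n₁}`. -/
def Ann (n₁ n₂ : ℝ) : Set TriV := Box n₂ \ Box n₁

/-- Inner vertex boundary: vertices of `A` with a neighbour outside `A`. -/
def innerBdry (A : Set TriV) : Set TriV := {v | v ∈ A ∧ ∃ w, w ∉ A ∧ adj v w}

/-- Outer vertex boundary: vertices outside `A` with a neighbour in `A`. -/
def outerBdry (A : Set TriV) : Set TriV := {v | v ∉ A ∧ ∃ w ∈ A, adj v w}

/-- There is a lattice path from `v` to `w` all of whose vertices lie in `A`. -/
def ConnIn (A : Set TriV) (v w : TriV) : Prop :=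
  ∃ l : List TriV, l ≠ [] ∧ l.head? = some v ∧ l.getLast? = some w ∧
    l.Chain' adj ∧ ∀ x ∈ l, x ∈ A

/-- The connected component of `v` inside the set `A` (empty if `v ∉ A`). -/
def clusterOf (A : Set TriV) (v : TriV) : Set TriV := {w | ConnIn A v w}

/-! ## Site configurations -/

/-- A site configuration: `true` = occupied, `false` = vacant. -/
abbrev Config : Type := TriV → Bool

/-- The set of occupied vertices of a configuration. -/
def occSet (ω : Config) : Set TriV := {v | ω v = true}

/-- The occupied cluster of a vertex. -/
def occCluster (ω : Config) (v : TriV) : Set TriV := clusterOf (occSet ω) v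

/-- A horizontal crossing of the rectangle `[x₁,x₂] × [y₁,y₂]` inside the set `A`:
a path in `A`, contained in the rectangle, joining a vertex adjacent to (within
distance `1` of) the left side to one adjacent to the right side. -/
def crossSetH (x₁ x₂ y₁ y₂ : ℝ) (A : Set TriV) : Prop :=
  ∃ v w, v.1.re ≤ x₁ + 1 ∧ x₂ - 1 ≤ w.1.re ∧
    ConnIn (A ∩ {u | x₁ ≤ u.1.re ∧ u.1.re ≤ x₂ ∧ y₁ ≤ u.1.im ∧ u.1.im ≤ y₂}) v w

/-- A vertical crossing of the rectangle `[x₁,x₂] × [y₁,y₂]` inside the set `A`. -/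
def crossSetV (x₁ x₂ y₁ y₂ : ℝ) (A : Set TriV) : Prop :=
  ∃ v w, v.1.im ≤ y₁ + 1 ∧ y₂ - 1 ≤ w.1.im ∧
    ConnIn (A ∩ {u | x₁ ≤ u.1.re ∧ u.1.re ≤ x₂ ∧ y₁ ≤ u.1.im ∧ u.1.im ≤ y₂}) v w

/-- An occupied horizontal crossing of `[0,2n] × [0,n]`. -/
def HorizCross (n : ℝ) (ω : Config) : Prop := crossSetH 0 (2 * n) 0 n (occSet ω)

/-- An occupied vertical crossing of `[0,2n] × [0,n]`. -/
def VertCross (n : ℝ) (ω : Config) : Prop := crossSetV 0 (2 * n) 0 n (occSet ω)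

/-! ## Bernoulli site percolation -/

/-- `μ` is Bernoulli site percolation with parameter `p` on the triangular lattice:
a probability measure whose cylinder events have the i.i.d. product probabilities. -/
def IsBernoulli (μ : Measure Config) (p : ℝ) : Prop :=
  IsProbabilityMeasure μ ∧
  ∀ (S : Finset TriV) (f : TriV → Bool),
    μ {ω | ∀ v ∈ S, ω v = f v} =
      ∏ v ∈ S, (if f v then ENNReal.ofReal p else ENNReal.ofReal (1 - p))

/-- The family of Bernoulli site percolation measures `(P_p)_{p ∈ [0,1]}`. -/
structure BernFamily where
  P : ℝ → Measure Config
  bern : ∀ p ∈ Set.Icc (0:ℝ) 1, IsBernoulli (P p) p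

/-- The critical point `p_c = 1/2` of site percolation on the triangular lattice. -/
def pcrit : ℝ := 1 / 2

/-- `θ(p)`: probability that the origin lies in an infinite occupied cluster. -/
def theta (F : BernFamily) (p : ℝ) : ℝ :=
  (F.P p {ω | (occCluster ω origin).Infinite}).toReal

/-- The raw characteristic length for `p < p_c`:
`min {n ≥ 1 : P_p(vertical crossing of [0,2n]×[0,n]) ≤ 0.001}`. -/
def rawLsub (F : BernFamily) (p : ℝ) : ℝ :=
  sInf {x : ℝ | ∃ n : ℕ, x = (n : ℝ) ∧ 1 ≤ n ∧
    (F.P p {ω | VertCross (n : ℝ) ω}).toReal ≤ 0.001}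

/-- The raw characteristic length `L(p)` (with `L(p) = L(1-p)` for `p > p_c`). -/
def rawL (F : BernFamily) (p : ℝ) : ℝ :=
  if p < pcrit then rawLsub F p else rawLsub F (1 - p)

/-- The set of prescribed points of the regularization of `L`: `0`, `1`, and the
discontinuity points of the raw `L` in `(0,p_c) ∪ (p_c,1)`. -/
def discSet (F : BernFamily) : Set ℝ :=
  {0, 1} ∪ {p | (p ∈ Set.Ioo (0:ℝ) pcrit ∪ Set.Ioo pcrit 1) ∧ ¬ContinuousAt (rawL F) p}

/-- The background data for near-critical percolation on the triangular lattice: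
the Bernoulli measures, together with the regularized characteristic length `L`
(equal to the raw `L` at its discontinuity points, `0` at `0` and `1`, linearly
interpolated in between, continuous and strictly monotone on each side of `p_c`). -/
structure PercBackground extends BernFamily where
  L : ℝ → ℝ
  L_zero : L 0 = 0
  L_one : L 1 = 0
  L_disc : ∀ p, (p ∈ Set.Ioo (0:ℝ) pcrit ∪ Set.Ioo pcrit 1) →
    ¬ContinuousAt (rawL toBernFamily) p → L p = rawL toBernFamily p
  L_cont : ContinuousOn L (Set.Icc 0 1 \ {pcrit})
  L_mono : StrictMonoOn L (Set.Ico 0 pcrit)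
  L_anti : StrictAntiOn L (Set.Ioc pcrit 1)
  L_affine : ∀ p q, p ∈ discSet toBernFamily → q ∈ discSet toBernFamily → p < q →
    Set.Ioo p q ∩ discSet toBernFamily = ∅ → pcrit ∉ Set.Ioo p q →
    ∀ r ∈ Set.Icc p q, L r = L p + (r - p) / (q - p) * (L q - L p)

/-! ## Time parametrization and characteristic scales -/

/-- `p(t) = 1 - e^{-t}`. -/
def pOf (t : ℝ) : ℝ := 1 - Real.exp (-t)

/-- The critical time `t_c = log 2`. -/
def tcrit : ℝ := Real.log 2

/-- `θ(t) = θ(p(t))`. -/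
def thetaT (bg : PercBackground) (t : ℝ) : ℝ := theta bg.toBernFamily (pOf t)

/-- `L(t) = L(p(t))`. -/
def Ltime (bg : PercBackground) (t : ℝ) : ℝ := bg.L (pOf t)

/-- `c_T = 2/√3`, so that `|B_n| ~ c_T n²`. -/
def cTri : ℝ := 2 / Real.sqrt 3

/-- For frozen percolation: `Ψ_N(R)` is the (unique) `t > t_c` with `c_T R² θ(t) = N`. -/
def PsiN (bg : PercBackground) (N : ℕ) (R : ℝ) : ℝ :=
  sInf {t : ℝ | tcrit < t ∧ cTri * R ^ 2 * thetaT bg t = N}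

/-- `t_∞(N) = sup {t > t_c : Ψ_N(L(t)) = t}`. -/
def tInfN (bg : PercBackground) (N : ℕ) : ℝ :=
  sSup {t : ℝ | tcrit < t ∧ PsiN bg N (Ltime bg t) = t}

/-- The characteristic scale `m_∞(N) = L(t_∞(N))` of `N`-frozen percolation. -/
def mInfN (bg : PercBackground) (N : ℕ) : ℝ := Ltime bg (tInfN bg N)

/-- For forest fires: `Ψ_ζ(R)` is the (unique) `t > t_c` with `c_T R² θ(t)(t-t_c) = 1/ζ`. -/
def PsiZ (bg : PercBackground) (ζ : ℝ) (R : ℝ) : ℝ :=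
  sInf {t : ℝ | tcrit < t ∧ cTri * R ^ 2 * thetaT bg t * (t - tcrit) = 1 / ζ}

/-- `t_∞(ζ) = sup {t > t_c : Ψ_ζ(L(t)) = t}`. -/
def tInfZ (bg : PercBackground) (ζ : ℝ) : ℝ :=
  sSup {t : ℝ | tcrit < t ∧ PsiZ bg ζ (Ltime bg t) = t}

/-- The characteristic scale `m_∞(ζ) = L(t_∞(ζ))` of forest fires. -/
def mInfZ (bg : PercBackground) (ζ : ℝ) : ℝ := Ltime bg (tInfZ bg ζ)

/-- The one-arm probability `π₁(n)`: at `p_c`, there is an occupied path from a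
neighbour of the origin to the inner boundary of `B_n`. -/
def pi1 (F : BernFamily) (n : ℝ) : ℝ :=
  (F.P pcrit {ω | ∃ v w, adj origin v ∧ w ∈ innerBdry (Box n) ∧
    ConnIn (occSet ω) v w}).toReal

/-! ## Frozen percolation -/

/-- The vertices of `D` that are occupied in `η` with birth time `< t`. -/
def earlierOcc (D : Set TriV) (τ : TriV → ℝ) (t : ℝ) (η : Config) : Set TriV :=
  {u | u ∈ D ∧ η u = true ∧ τ u < t}

/-- `η` is the final configuration of `N`-frozen percolation on the domain `D`
driven by the birth times `τ`: a vertex `v ∈ D` is (eventually) occupied iff at its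
birth time no neighbour lies in an occupied cluster of volume `≥ N`. -/
def IsFrozenFinal (N : ℕ) (D : Set TriV) (τ : TriV → ℝ) (η : Config) : Prop :=
  (∀ v, v ∉ D → η v = false) ∧
  ∀ v ∈ D, (η v = true ↔
    ∀ w, adj v w → (clusterOf (earlierOcc D τ (τ v) η) w).encard < (N : ℕ∞))

/-- A set of vertices surrounds the origin: it contains it, or the connected
component of the origin in its complement is finite. -/
def SurroundsO (C : Set TriV) : Prop :=
  origin ∈ C ∨ (clusterOf Cᶜ origin).Finite

/-- `C` is an occupied cluster of the configuration `ω`. -/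
def IsOccCluster (ω : Config) (C : Set TriV) : Prop :=
  ∃ v, ω v = true ∧ C = occCluster ω v

/-- The collection `F` of frozen clusters (volume `≥ N`) surrounding the origin
in the final configuration `η`. -/
def frozenF (N : ℕ) (η : Config) : Set (Set TriV) :=
  {C | IsOccCluster η C ∧ (N : ℕ∞) ≤ C.encard ∧ SurroundsO C}

/-- `μ` is the product over the vertices of the exponential law of the birth times
(so that `P(τ_v ≤ t) = 1 - e^{-t}`, independently over vertices). -/
def IsExpProduct (μ : Measure (TriV → ℝ)) : Prop :=
  IsProbabilityMeasure μ ∧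
  ∀ (S : Finset TriV) (a : TriV → ℝ),
    μ {τ | ∀ v ∈ S, τ v ≤ a v} = ∏ v ∈ S, ENNReal.ofReal (1 - Real.exp (-(a v)))

/-- `n^FP = 1 / log (96/5)`. -/
def nFP : ℝ := 1 / Real.log (96 / 5)

/-- `n^FF = 1 / log (96/41)`. -/
def nFF : ℝ := 1 / Real.log (96 / 41)

/-! ## Circuits -/

/-- A circuit: a closed lattice path whose vertices are distinct except that the
last one equals the first one. -/
def IsCircuitList (l : List TriV) : Prop :=
  l ≠ [] ∧ l.Chain' adj ∧ l.head? = l.getLast? ∧ l.dropLast.Nodup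

/-- The set of vertices visited by a (circuit) list. -/
def circuitSet (l : List TriV) : Set TriV := {v | v ∈ l}

/-- `v` is frozen in the final configuration `η`: it belongs to an occupied
cluster of volume `≥ N`. -/
def frozenVtx (N : ℕ) (η : Config) (v : TriV) : Prop :=
  η v = true ∧ (N : ℕ∞) ≤ (occCluster η v).encard

/-- There exist `k` pairwise disjoint frozen circuits surrounding the origin. -/
def DisjointFrozenCircuits (N : ℕ) (η : Config) (k : ℕ) : Prop :=
  ∃ ls : Fin k → List TriV,
    (∀ i, IsCircuitList (ls i) ∧ (∀ v ∈ circuitSet (ls i), frozenVtx N η v) ∧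
      origin ∉ circuitSet (ls i) ∧ (clusterOf ((circuitSet (ls i))ᶜ) origin).Finite) ∧
    ∀ i j, i ≠ j → Disjoint (circuitSet (ls i)) (circuitSet (ls j))

/-! ## Frozen percolation with modified boundary rules -/

inductive FPSt | vac | occ | froz
deriving DecidableEq

/-- The occupied (non-frozen) vertices of a three-state configuration. -/
def occFP (s : TriV → FPSt) : Set TriV := {v | s v = FPSt.occ}

/-- No birth time of a vertex of `D` in the interval `(t₁, t₂]`. -/
def noBirthIoc (D : Set TriV) (τ : TriV → ℝ) (t₁ t₂ : ℝ) : Prop :=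
  ∀ u ∈ D, ¬(t₁ < τ u ∧ τ u ≤ t₂)

/-- No birth time of a vertex of `D` in the open interval `(t₁, t₂)`. -/
def noBirthIoo (D : Set TriV) (τ : TriV → ℝ) (t₁ t₂ : ℝ) : Prop :=
  ∀ u ∈ D, ¬(t₁ < τ u ∧ τ u < t₂)

/-- The union of the occupied clusters adjacent to `v`. -/
def unionAdjClusters (s : TriV → FPSt) (v : TriV) : Set TriV :=
  {u | ∃ w, adj v w ∧ ConnIn (occFP s) w u}

/-- `s` is a trajectory of `N`-frozen percolation with modified boundary rules on
`D`, driven by the birth times `τ`: at the birth time of `v`, if `{v}` together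
with the adjacent occupied clusters has volume `≥ N` then all

these vertices freeze, and otherwise `v` becomes occupied. -/
def IsModFPTraj (N : ℕ) (D : Set TriV) (τ : TriV → ℝ) (s : ℝ → TriV → FPSt) : Prop :=
  (∀ t v, v ∉ D → s t v = FPSt.vac) ∧
  (∀ v ∈ D, ∀ t, t < τ v → s t v = FPSt.vac) ∧
  (∀ v ∈ D, ∀ t, τ v ≤ t → s t v ≠ FPSt.vac) ∧
  (∀ t₁ t₂, t₁ ≤ t₂ → noBirthIoc D τ t₁ t₂ → s t₂ = s t₁) ∧
  (∀ v ∈ D, (∀ u ∈ D, u ≠ v → τ u ≠ τ v) →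
    ∀ t', t' < τ v → noBirthIoo D τ t' (τ v) →
      (((N : ℕ∞) ≤ (insert v (unionAdjClusters (s t') v)).encard →
          (∀ u ∈ insert v (unionAdjClusters (s t') v), s (τ v) u = FPSt.froz) ∧
          (∀ u ∉ insert v (unionAdjClusters (s t') v), s (τ v) u = s t' u)) ∧
        ((insert v (unionAdjClusters (s t') v)).encard < (N : ℕ∞) →
          s (τ v) v = FPSt.occ ∧ ∀ u, u ≠ v → s (τ v) u = s t' u)))

/-- The freezing time of a vertex. -/
def frzTime (s : ℝ → TriV → FPSt) (v : TriV) : ℝ := sInf {t | s t v = FPSt.froz}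

/-- `C` is a frozen cluster of the modified process: the set of vertices connected
to some frozen vertex `v` through vertices frozen at the same time as `v`. -/
def IsModFrozenCluster (s : ℝ → TriV → FPSt) (C : Set TriV) : Prop :=
  ∃ v, (∃ t, s t v = FPSt.froz) ∧
    C = {w | ConnIn {x | (∃ t, s t x = FPSt.froz) ∧ frzTime s x = frzTime s v} v w}

/-- The frozen clusters surrounding the origin, for the modified process. -/
def modFrozenF (s : ℝ → TriV → FPSt) : Set (Set TriV) :=
  {C | IsModFrozenCluster s C ∧ SurroundsO C}

/-! ## Forest fires without recovery -/

inductive FFSt | vac | occ | burnt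
deriving DecidableEq

/-- Driving randomness of a forest fire: the birth times, and the successive gaps
between the ignition times of each vertex. -/
abbrev FFOmega : Type := (TriV → ℝ) × (TriV → ℕ → ℝ)

/-- The `n`-th ignition time of `v`: the sum of the first `n+1` gaps. -/
def arrTime (g : TriV → ℕ → ℝ) (v : TriV) (n : ℕ) : ℝ :=
  ∑ i ∈ Finset.range (n + 1), g v i

/-- The law of the driving randomness of a forest fire with ignition rate `ζ`:
birth times are i.i.d. exponential of rate `1` and the ignition gaps are i.i.d.
exponential of rate `ζ`, all independent. -/
def IsFFLaw (ζ : ℝ) (μ : Measure FFOmega) : Prop :=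
  IsProbabilityMeasure μ ∧
  ∀ (S : Finset TriV) (T : Finset (TriV × ℕ)) (a : TriV → ℝ) (b : TriV × ℕ → ℝ),
    μ {x | (∀ v ∈ S, x.1 v ≤ a v) ∧ (∀ q ∈ T, x.2 q.1 q.2 ≤ b q)} =
      (∏ v ∈ S, ENNReal.ofReal (1 - Real.exp (-(a v)))) *
        ∏ q ∈ T, ENNReal.ofReal (1 - Real.exp (-(ζ * b q)))

/-- The occupied vertices of a three-state forest fire configuration. -/
def occFF (s : TriV → FFSt) : Set TriV := {v | s v = FFSt.occ}

/-- `t` is an event time (birth time, or ignition time not exceeding the stopping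
parameter `Tstop`) of a vertex of `D`. -/
def isEvtTime (D : Set TriV) (Tstop : ℝ≥0∞) (x : FFOmega) (t : ℝ) : Prop :=
  (∃ v ∈ D, x.1 v = t) ∨
    (∃ v ∈ D, ∃ n, arrTime x.2 v n = t ∧ ENNReal.ofReal t ≤ Tstop)

/-- No event time in `(t₁, t₂]`. -/
def noEvtIoc (D : Set TriV) (Tstop : ℝ≥0∞) (x : FFOmega) (t₁ t₂ : ℝ) : Prop :=
  ∀ t, t₁ < t → t ≤ t₂ → ¬ isEvtTime D Tstop x t

/-- No event time in `(t₁, t₂)`. -/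
def noEvtIoo (D : Set TriV) (Tstop : ℝ≥0∞) (x : FFOmega) (t₁ t₂ : ℝ) : Prop :=
  ∀ t, t₁ < t → t < t₂ → ¬ isEvtTime D Tstop x t

/-- `s` is a trajectory of the forest fire without recovery (FFWoR) on the domain
`D`, with ignitions discarded after time `Tstop` (take `Tstop = ⊤` for the plain
process): vertices become occupied at their birth times, and at an ignition time
of an occupied vertex its whole occupied cluster burns instantaneously; burnt
vertices stay burnt forever. -/
def IsFFWoRTraj (D : Set TriV) (Tstop : ℝ≥0∞) (x : FFOmega) (s : ℝ → TriV → FFSt) : Prop :=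
  (∀ t v, v ∉ D → s t v = FFSt.vac) ∧
  (∀ v ∈ D, ∀ t, t < x.1 v → s t v = FFSt.vac) ∧
  (∀ t₁ t₂, t₁ ≤ t₂ → noEvtIoc D Tstop x t₁ t₂ → s t₂ = s t₁) ∧
  (∀ v ∈ D, (∀ u ∈ D, u ≠ v → x.1 u ≠ x.1 v) →
    (∀ u ∈ D, ∀ n, arrTime x.2 u n ≠ x.1 v) →
    ∀ t', t' < x.1 v → noEvtIoo D Tstop x t' (x.1 v) →
      s (x.1 v) v = FFSt.occ ∧ ∀ u, u ≠ v → s (x.1 v) u = s t' u) ∧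
  (∀ v ∈ D, ∀ n, ENNReal.ofReal (arrTime x.2 v n) ≤ Tstop →
    (∀ u ∈ D, x.1 u ≠ arrTime x.2 v n) →
    (∀ u ∈ D, ∀ k, (u, k) ≠ (v, n) → arrTime x.2 u k ≠ arrTime x.2 v n) →
    ∀ t', t' < arrTime x.2 v n → noEvtIoo D Tstop x t' (arrTime x.2 v n) →
      ((s t' v = FFSt.occ →
          (∀ u ∈ clusterOf (occFF (s t')) v, s (arrTime x.2 v n) u = FFSt.burnt) ∧
          (∀ u ∉ clusterOf (occFF (s t')) v, s (arrTime x.2 v n) u = s t' u)) ∧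
        (s t' v ≠ FFSt.occ → s (arrTime x.2 v n) = s t')))

/-- The cluster `C` burns at time `t` in the trajectory `s`. -/
def IsBurnEvent (D : Set TriV) (Tstop : ℝ≥0∞) (x : FFOmega) (s : ℝ → TriV → FFSt)
    (t : ℝ) (C : Set TriV) : Prop :=
  ∃ v ∈ D, ∃ n, arrTime x.2 v n = t ∧ ENNReal.ofReal t ≤ Tstop ∧
    ∃ t', t' < t ∧ noEvtIoo D Tstop x t' t ∧ s t' v = FFSt.occ ∧
      C = clusterOf (occFF (s t')) v

/-- The collection `F` of burnt clusters surrounding the origin. -/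
def burntF (D : Set TriV) (Tstop : ℝ≥0∞) (x : FFOmega) (s : ℝ → TriV → FFSt) :
    Set (Set TriV) :=
  {C | (∃ t, IsBurnEvent D Tstop x s t C) ∧ SurroundsO C}

/-- `V_∞(ζ) = m_∞(ζ)² π₁(m_∞(ζ))`. -/
def VInf (bg : PercBackground) (ζ : ℝ) : ℝ :=
  mInfZ bg ζ ^ 2 * pi1 bg.toBernFamily (mInfZ bg ζ)

/-! ## Percolation with impurities -/

/-- Sample of percolation with impurities: a Bernoulli configuration, the hole
indicators, and the hole radii. -/
abbrev ImpOmega : Type := Config × (TriV → Bool) × (TriV → ℝ)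

/-- The hole (impurity) centered at `u` (empty if no hole is centered at `u`). -/
def holeAt (x : ImpOmega) (u : TriV) : Set TriV :=
  {v | x.2.1 u = true ∧ v ∈ BoxAt u (x.2.2 u)}

/-- `v` belongs to some hole. -/
def inSomeHole (x : ImpOmega) (v : TriV) : Prop := ∃ u, v ∈ holeAt x u

/-- The occupied set of the percolation process with impurities: Bernoulli-occupied
vertices lying in no hole. -/
def impOccSet (x : ImpOmega) : Set TriV := {v | x.1 v = true ∧ ¬ inSomeHole x v}

/-- `μ` is the law of percolation with impurities: the Bernoulli configuration has
parameter `p`, a hole is centered at `v` with probability `π v`, the radii have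
law `ρ`, and everything is independent. -/
def IsImpurityLaw (μ : Measure ImpOmega) (p : ℝ) (π : TriV → ℝ) (ρ : Measure ℝ) : Prop :=
  IsProbabilityMeasure μ ∧ IsProbabilityMeasure ρ ∧
  ∀ (S₁ S₂ S₃ : Finset TriV) (f h : TriV → Bool) (b : TriV → ℝ),
    μ {x | (∀ v ∈ S₁, x.1 v = f v) ∧ (∀ v ∈ S₂, x.2.1 v = h v) ∧
        (∀ v ∈ S₃, x.2.2 v ≤ b v)} =
      (∏ v ∈ S₁, (if f v then ENNReal.ofReal p else ENNReal.ofReal (1 - p))) *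
        (∏ v ∈ S₂, (if h v then ENNReal.ofReal (π v) else ENNReal.ofReal (1 - π v))) *
        ∏ v ∈ S₃, ρ (Set.Iic (b v))

/-- The Assumption on the impurity parameters `(π^{(m)})`, `(ρ^{(m)})`: for all
`m ≥ 1`, `r ≥ 0` and all vertices,
`π_v^{(m)} ρ^{(m)}([r,∞)) ≤ (υ(m)/m²) (max(r,1)/m)^{γ-2} e^{-c r/m}`. -/
def ImpurityAssumption (c γ : ℝ) (π : ℕ → TriV → ℝ) (ρ : ℕ → Measure ℝ)
    (υ : ℕ → ℝ) : Prop :=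
  ∀ m : ℕ, 1 ≤ m → ∀ r : ℝ, 0 ≤ r → ∀ _v : TriV,
    (π m _v) * (ρ m (Set.Ici r)).toReal ≤
      υ m / (m : ℝ) ^ 2 * (max r 1 / (m : ℝ)) ^ (γ - 2) * Real.exp (-c * r / (m : ℝ))

/-- The event `H(A)` that some hole crosses the annulus `A_{n₁,n₂}(z)`. -/
def HoleCrossAnn (x : ImpOmega) (z : TriV) (n₁ n₂ : ℝ) : Prop :=
  ∃ u, (holeAt x u ∩ outerBdry (BoxAt z n₁)).Nonempty ∧
    (holeAt x u ∩ innerBdry (BoxAt z n₂)).Nonempty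

/-- The event `H̄̄(A)`: some hole crosses the annulus `A_{n₁,n₂}(z)`, does not
contain `B_{n₁}(z)`, and does not reach the inner boundary of `B_{2n₂}(z)`. -/
def HoleCrossAnnRestr (x : ImpOmega) (z : TriV) (n₁ n₂ : ℝ) : Prop :=
  ∃ u, (holeAt x u ∩ outerBdry (BoxAt z n₁)).Nonempty ∧
    (holeAt x u ∩ innerBdry (BoxAt z n₂)).Nonempty ∧
    ¬ BoxAt z n₁ ⊆ holeAt x u ∧
    holeAt x u ∩ innerBdry (BoxAt z (2 * n₂)) = ∅

/-! ## Arm events -/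

/-- A one-arm event inside the set `A`: a path in `A ∩ A_{n₁,n₂}` from the outer
boundary of `B_{n₁}` to the inner boundary of `B_{n₂}`. -/
def OneArm (A : Set TriV) (n₁ n₂ : ℝ) : Prop :=
  ∃ v w, v ∈ outerBdry (Box n₁) ∧ w ∈ innerBdry (Box n₂) ∧
    ConnIn (A ∩ Ann n₁ n₂) v w

/-- An arm of the annulus `A_{n₁,n₂}` inside the set `A`, given as a list. -/
def IsArm (A : Set TriV) (n₁ n₂ : ℝ) (l : List TriV) : Prop :=
  l ≠ [] ∧ l.Chain' adj ∧ (∀ x ∈ l, x ∈ A ∩ Ann n₁ n₂) ∧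
    (∃ v, l.head? = some v ∧ v ∈ outerBdry (Box n₁)) ∧
    ∃ w, l.getLast? = some w ∧ w ∈ innerBdry (Box n₂)

/-- The argument (angle) of the starting point of an arm. -/
def armArg (l : List TriV) : ℝ := ((l.head?).map fun v => Complex.arg v.1).getD 0

/-- The four-arm event with types occupied, vacant, occupied, vacant in
counterclockwise order: four disjoint arms, in increasing angular order of their
starting points, with alternating types. -/
def FourArmOVOV (occ vac : Set TriV) (n₁ n₂ : ℝ) : Prop :=
  ∃ l₁ l₂ l₃ l₄ : List TriV,
    ((IsArm occ n₁ n₂ l₁ ∧ IsArm vac n₁ n₂ l₂ ∧ IsArm occ n₁ n₂ l₃ ∧ IsArm vac n₁ n₂ l₄) ∨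
      (IsArm vac n₁ n₂ l₁ ∧ IsArm occ n₁ n₂ l₂ ∧ IsArm vac n₁ n₂ l₃ ∧ IsArm occ n₁ n₂ l₄)) ∧
    armArg l₁ < armArg l₂ ∧ armArg l₂ < armArg l₃ ∧ armArg l₃ < armArg l₄ ∧
    (∀ x ∈ l₁, x ∉ l₂ ∧ x ∉ l₃ ∧ x ∉ l₄) ∧
    (∀ x ∈ l₂, x ∉ l₃ ∧ x ∉ l₄) ∧
    ∀ x ∈ l₃, x ∉ l₄

/-- The four-arm probability `π₄(n₁,n₂)` at criticality. -/
def pi4 (F : BernFamily) (n₁ n₂ : ℝ) : ℝ :=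
  (F.P pcrit {ω | FourArmOVOV (occSet ω) {v | ω v = false} n₁ n₂}).toReal

/-- The union of the holes with centers in `U`. -/
def holesOf (x : ImpOmega) (U : Set TriV) : Set TriV := ⋃ u ∈ U, holeAt x u

/-- The event `W₄(A_{n₁,n₂})`: for some set `U` of hole centers, the configuration
obtained by turning vacant all vertices covered by the holes centered in `U`
satisfies the four-arm event. -/
def W4 (x : ImpOmega) (n₁ n₂ : ℝ) : Prop :=
  ∃ U : Set TriV,
    FourArmOVOV (occSet x.1 \ holesOf x U) ({v | x.1 v = false} ∪ holesOf x U) n₁ n₂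

/-! ## Largest cluster in a box -/

/-- `C` is a (connected) cluster of the set `A`. -/
def IsClusterIn (A : Set TriV) (C : Set TriV) : Prop := ∃ v ∈ A, C = clusterOf A v

/-- `C` is a largest cluster of the set `A`. -/
def IsMaxCluster (A : Set TriV) (C : Set TriV) : Prop :=
  IsClusterIn A C ∧ ∀ C', IsClusterIn A C' → C'.ncard ≤ C.ncard

/-- The event `Θ(A_{n/2,n} | C)`: the cluster `C` contains a circuit in the
annulus `A_{n/2,n}` surrounding `B_{n/2}`, and a crossing of this annulus. -/
def ThetaEvent (n : ℝ) (C : Set TriV) : Prop :=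
  (∃ l : List TriV, IsCircuitList l ∧ circuitSet l ⊆ C ∩ Ann (n / 2) n ∧
    (clusterOf ((circuitSet l)ᶜ) origin).Finite) ∧
  ∃ v w, v ∈ outerBdry (Box (n / 2)) ∧ w ∈ innerBdry (Box n) ∧
    ConnIn (C ∩ Ann (n / 2) n) v w

/-! ## Radius law (for the domination lemma) -/

/-- The radius of a set of vertices, seen from the origin. -/
def radiusOf (C : Set TriV) : ℝ := sInf {n : ℝ | 0 ≤ n ∧ C ⊆ Box n}

/-- `ρ` is the law of `rad(C(0))` in Bernoulli percolation with parameter `p(τ)`,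
where `τ` is uniform on `[0, t_c - ε̄]`. -/
def IsRadiusLaw (F : BernFamily) (εbar : ℝ) (ρ : Measure ℝ) : Prop :=
  IsProbabilityMeasure ρ ∧ ρ (Set.Iio 0) = 0 ∧
  ∀ b : ℝ, 0 ≤ b →
    ρ (Set.Iic b) * ENNReal.ofReal (tcrit - εbar) =
      ∫⁻ u in Set.Icc (0:ℝ) (tcrit - εbar), F.P (pOf u) {ω | occCluster ω origin ⊆ Box b}



lemma RH_sqrt3_lt_two : Real.sqrt 3 < 2 := by
  nlinarith [Real.sq_sqrt (by norm_num : (0:ℝ) ≤ 3), Real.sqrt_nonneg 3]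

lemma RH_one_le_sqrt3 : 1 ≤ Real.sqrt 3 := by
  nlinarith [Real.sq_sqrt (by norm_num : (0:ℝ) ≤ 3), Real.sqrt_nonneg 3]

lemma RH_exp_re : (Complex.exp (Complex.I * ((Real.pi : ℂ) / 3))).re = 1/2 := by
  have h : Complex.I * ((Real.pi : ℂ) / 3) = ((Real.pi/3 : ℝ) : ℂ) * Complex.I := by
    push_cast; ring
  rw [h, Complex.exp_ofReal_mul_I_re, Real.cos_pi_div_three]

lemma RH_exp_im : (Complex.exp (Complex.I * ((Real.pi : ℂ) / 3))).im = Real.sqrt 3 / 2 := by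
  have h : Complex.I * ((Real.pi : ℂ) / 3) = ((Real.pi/3 : ℝ) : ℂ) * Complex.I := by
    push_cast; ring
  rw [h, Complex.exp_ofReal_mul_I_im, Real.sin_pi_div_three]

lemma RH_latre (x y : ℤ) :
    ((x : ℂ) + (y : ℂ) * Complex.exp (Complex.I * ((Real.pi : ℂ) / 3))).re
      = (x : ℝ) + (y : ℝ) * (1/2) := by
  simp [Complex.add_re, Complex.mul_re, RH_exp_re, RH_exp_im]

lemma RH_latim (x y : ℤ) :
    ((x : ℂ) + (y : ℂ) * Complex.exp (Complex.I * ((Real.pi : ℂ) / 3))).im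
      = (y : ℝ) * (Real.sqrt 3 / 2) := by
  simp [Complex.add_im, Complex.mul_im, RH_exp_re, RH_exp_im]

def RHcx (v : TriV) : ℤ := v.2.choose
def RHcy (v : TriV) : ℤ := v.2.choose_spec.choose

lemma RH_coord_re (v : TriV) : v.1.re = (RHcx v : ℝ) + (RHcy v : ℝ) * (1/2) := by
  have h : v.1 = ((RHcx v : ℂ)) + (RHcy v : ℂ) * Complex.exp (Complex.I * ((Real.pi : ℂ)/3)) :=
    v.2.choose_spec.choose_spec
  rw [h, RH_latre]

lemma RH_coord_im (v : TriV) : v.1.im = (RHcy v : ℝ) * (Real.sqrt 3 / 2) := by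
  have h : v.1 = ((RHcx v : ℂ)) + (RHcy v : ℂ) * Complex.exp (Complex.I * ((Real.pi : ℂ)/3)) :=
    v.2.choose_spec.choose_spec
  rw [h, RH_latim]

lemma RH_coords_inj : Function.Injective (fun v : TriV => (RHcx v, RHcy v)) := by
  intro v w h
  have h1 : RHcx v = RHcx w := congrArg Prod.fst h
  have h2 : RHcy v = RHcy w := congrArg Prod.snd h
  apply Subtype.ext
  apply Complex.ext
  · rw [RH_coord_re, RH_coord_re, h1, h2]
  · rw [RH_coord_im, RH_coord_im, h2]

instance RH_countable : Countable TriV := by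
  exact Function.Injective.countable RH_coords_inj

/-- lattice point with re ∈ [A, A+1), im ∈ [B, B+1), plus neighbours v±1. -/
lemma RH_window_co (A B : ℝ) :
    ∃ v : TriV, A ≤ v.1.re ∧ v.1.re < A + 1 ∧ B ≤ v.1.im ∧ v.1.im < B + 1 ∧
      (∃ wp : TriV, adj v wp ∧ wp.1 = v.1 + 1) ∧
      (∃ wm : TriV, adj v wm ∧ wm.1 = v.1 - 1) := by
  set y : ℤ := ⌈B / (Real.sqrt 3 / 2)⌉ with hy
  set x : ℤ := ⌈A - (y:ℝ)/2⌉ with hx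
  have hs : (0:ℝ) < Real.sqrt 3 / 2 := by positivity
  refine ⟨⟨(x : ℂ) + (y : ℂ) * Complex.exp (Complex.I * ((Real.pi : ℂ)/3)), x, y, rfl⟩, ?_, ?_, ?_, ?_, ?_, ?_⟩
  · rw [RH_latre]; have := Int.le_ceil (A - (y:ℝ)/2); push_cast; linarith
  · rw [RH_latre]; have := Int.ceil_lt_add_one (A - (y:ℝ)/2); push_cast; linarith
  · rw [RH_latim]
    have h1 : B / (Real.sqrt 3/2) ≤ (y:ℝ) := Int.le_ceil _
    calc B = (B / (Real.sqrt 3/2)) * (Real.sqrt 3/2) := by field_simp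
    _ ≤ (y:ℝ) * (Real.sqrt 3/2) := by
        exact mul_le_mul_of_nonneg_right h1 (le_of_lt hs)
  · rw [RH_latim]
    have h1 : (y:ℝ) < B / (Real.sqrt 3/2) + 1 := Int.ceil_lt_add_one _
    have h2 : (y:ℝ) * (Real.sqrt 3/2) < (B / (Real.sqrt 3/2) + 1) * (Real.sqrt 3/2) :=
      mul_lt_mul_of_pos_right h1 hs
    have h3 : (B / (Real.sqrt 3/2) + 1) * (Real.sqrt 3/2) = B + Real.sqrt 3/2 := by field_simp
    have := RH_sqrt3_lt_two
    linarith
  · refine ⟨⟨(x+1 : ℂ) + (y : ℂ) * Complex.exp (Complex.I * ((Real.pi : ℂ)/3)), x+1, y, by push_cast; ring⟩, ?_, by push_cast; ring⟩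
    unfold adj
    simp only
    have : ((x : ℂ) + (y : ℂ) * Complex.exp (Complex.I * ((Real.pi : ℂ)/3))) - ((x+1 : ℂ) + (y : ℂ) * Complex.exp (Complex.I * ((Real.pi : ℂ)/3))) = -1 := by ring
    rw [this]; simp
  · refine ⟨⟨(x-1 : ℂ) + (y : ℂ) * Complex.exp (Complex.I * ((Real.pi : ℂ)/3)), x-1, y, by push_cast; ring⟩, ?_, by push_cast; ring⟩
    unfold adj
    simp only
    have : ((x : ℂ) + (y : ℂ) * Complex.exp (Complex.I * ((Real.pi : ℂ)/3))) - ((x-1 : ℂ) + (y : ℂ) * Complex.exp (Complex.I * ((Real.pi : ℂ)/3))) = 1 := by ring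
    rw [this]; simp

/-- lattice point with re ∈ (A, A+1], im ∈ [B, B+1), plus neighbours v±1. -/
lemma RH_window_oc (A B : ℝ) :
    ∃ v : TriV, A < v.1.re ∧ v.1.re ≤ A + 1 ∧ B ≤ v.1.im ∧ v.1.im < B + 1 ∧
      (∃ wp : TriV, adj v wp ∧ wp.1 = v.1 + 1) ∧
      (∃ wm : TriV, adj v wm ∧ wm.1 = v.1 - 1) := by
  set y : ℤ := ⌈B / (Real.sqrt 3 / 2)⌉ with hy
  set x : ℤ := ⌊A - (y:ℝ)/2⌋ + 1 with hx
  have hs : (0:ℝ) < Real.sqrt 3 / 2 := by positivity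
  refine ⟨⟨(x : ℂ) + (y : ℂ) * Complex.exp (Complex.I * ((Real.pi : ℂ)/3)), x, y, rfl⟩, ?_, ?_, ?_, ?_, ?_, ?_⟩
  · rw [RH_latre]
    have h1 := Int.lt_floor_add_one (A - (y:ℝ)/2)
    have h2 : (x:ℝ) = (⌊A - (y:ℝ)/2⌋ : ℝ) + 1 := by rw [hx]; push_cast; ring
    linarith
  · rw [RH_latre]
    have h1 := Int.floor_le (A - (y:ℝ)/2)
    have h2 : (x:ℝ) = (⌊A - (y:ℝ)/2⌋ : ℝ) + 1 := by rw [hx]; push_cast; ring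
    linarith
  · rw [RH_latim]
    have h1 : B / (Real.sqrt 3/2) ≤ (y:ℝ) := Int.le_ceil _
    calc B = (B / (Real.sqrt 3/2)) * (Real.sqrt 3/2) := by field_simp
    _ ≤ (y:ℝ) * (Real.sqrt 3/2) := mul_le_mul_of_nonneg_right h1 (le_of_lt hs)
  · rw [RH_latim]
    have h1 : (y:ℝ) < B / (Real.sqrt 3/2) + 1 := Int.ceil_lt_add_one _
    have h2 : (y:ℝ) * (Real.sqrt 3/2) < (B / (Real.sqrt 3/2) + 1) * (Real.sqrt 3/2) :=
      mul_lt_mul_of_pos_right h1 hs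
    have h3 : (B / (Real.sqrt 3/2) + 1) * (Real.sqrt 3/2) = B + Real.sqrt 3/2 := by field_simp
    have := RH_sqrt3_lt_two
    linarith
  · refine ⟨⟨(x+1 : ℂ) + (y : ℂ) * Complex.exp (Complex.I * ((Real.pi : ℂ)/3)), x+1, y, by push_cast; ring⟩, ?_, by push_cast; ring⟩
    unfold adj
    simp only
    have : ((x : ℂ) + (y : ℂ) * Complex.exp (Complex.I * ((Real.pi : ℂ)/3))) - ((x+1 : ℂ) + (y : ℂ) * Complex.exp (Complex.I * ((Real.pi : ℂ)/3))) = -1 := by ring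
    rw [this]; simp
  · refine ⟨⟨(x-1 : ℂ) + (y : ℂ) * Complex.exp (Complex.I * ((Real.pi : ℂ)/3)), x-1, y, by push_cast; ring⟩, ?_, by push_cast; ring⟩
    unfold adj
    simp only
    have : ((x : ℂ) + (y : ℂ) * Complex.exp (Complex.I * ((Real.pi : ℂ)/3))) - ((x-1 : ℂ) + (y : ℂ) * Complex.exp (Complex.I * ((Real.pi : ℂ)/3))) = 1 := by ring
    rw [this]; simp

def RHd (w : ℂ) : ℝ := max |w.re| |w.im|

lemma RHd_nonneg (w : ℂ) : 0 ≤ RHd w := le_trans (abs_nonneg _) (le_max_left _ _)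

lemma RHd_box {z v : TriV} {n : ℝ} : v ∈ BoxAt z n ↔ RHd (v.1 - z.1) ≤ n :=
  Iff.symm max_le_iff

lemma RHd_tri (a b c : ℂ) : RHd (a - c) ≤ RHd (a - b) + RHd (b - c) := by
  unfold RHd
  apply max_le
  · have h : (a - c).re = (a - b).re + (b - c).re := by
      rw [Complex.sub_re, Complex.sub_re, Complex.sub_re]; ring
    rw [h]
    exact le_trans (abs_add_le _ _) (add_le_add (le_max_left _ _) (le_max_left _ _))
  · have h : (a - c).im = (a - b).im + (b - c).im := by
      rw [Complex.sub_im, Complex.sub_im, Complex.sub_im]; ring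
    rw [h]
    exact le_trans (abs_add_le _ _) (add_le_add (le_max_right _ _) (le_max_right _ _))

lemma RHd_comm (a b : ℂ) : RHd (a - b) = RHd (b - a) := by
  unfold RHd
  simp only [Complex.sub_re, Complex.sub_im]
  rw [abs_sub_comm a.re b.re, abs_sub_comm a.im b.im]

lemma RH_adj_le {v w : TriV} (h : adj v w) : RHd (v.1 - w.1) ≤ 1 := by
  unfold RHd
  exact max_le (h ▸ Complex.abs_re_le_norm _) (h ▸ Complex.abs_im_le_norm _)

lemma RH_hole_geom (z u : TriV) (n₁ n₂ : ℝ) (h1 : 1 ≤ n₁) (h12 : n₁ ≤ n₂ / 2)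
    (x : ImpOmega)
    (hA : (holeAt x u ∩ outerBdry (BoxAt z n₁)).Nonempty)
    (hB : (holeAt x u ∩ innerBdry (BoxAt z n₂)).Nonempty)
    (hC : ¬ BoxAt z n₁ ⊆ holeAt x u)
    (hD : holeAt x u ∩ innerBdry (BoxAt z (2 * n₂)) = ∅) :
    x.2.1 u = true ∧
    max (max (RHd (u.1 - z.1) - n₁ - 1) (n₂ - 1 - RHd (u.1 - z.1))) 0 ≤ x.2.2 u ∧
    x.2.2 u ≤ RHd (u.1 - z.1) + n₁ ∧
    RHd (u.1 - z.1) ≤ 2*n₂ + 2*n₁ + 4 := by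
  obtain ⟨p, ⟨hpi, hpbox⟩, hpo⟩ := hA
  obtain ⟨q, ⟨hqi, hqbox⟩, hqin⟩ := hB
  set r := x.2.2 u with hr
  set d := RHd (u.1 - z.1) with hd
  have hn2 : 2 ≤ n₂ := by linarith
  have hpbox' : RHd (p.1 - u.1) ≤ r := RHd_box.mp hpbox
  have hr0 : 0 ≤ r := le_trans (RHd_nonneg _) hpbox'
  obtain ⟨hpout, w₁, hw₁box, hw₁adj⟩ := hpo
  have hpz : RHd (p.1 - z.1) ≤ n₁ + 1 := by
    have h2 := RH_adj_le hw₁adj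
    have h3 := RHd_box.mp hw₁box
    have h4 := RHd_tri p.1 w₁.1 z.1
    linarith
  have hlow1 : d - n₁ - 1 ≤ r := by
    have h4 := RHd_tri u.1 p.1 z.1
    have h2 : RHd (u.1 - p.1) ≤ r := by rw [RHd_comm]; exact hpbox'
    rw [← hd] at h4
    linarith
  obtain ⟨hqmem, w₂, hw₂nbox, hw₂adj⟩ := hqin
  have hw₂far : n₂ < RHd (w₂.1 - z.1) := by
    by_contra hcon; push_neg at hcon; exact hw₂nbox (RHd_box.mpr hcon)
  have hqz : n₂ - 1 ≤ RHd (q.1 - z.1) := by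
    have h4 := RHd_tri w₂.1 q.1 z.1
    have h2 : RHd (w₂.1 - q.1) ≤ 1 := by rw [RHd_comm]; exact RH_adj_le hw₂adj
    linarith
  have hlow2 : n₂ - 1 - d ≤ r := by
    have h4 := RHd_tri q.1 u.1 z.1
    have h2 : RHd (q.1 - u.1) ≤ r := RHd_box.mp hqbox
    have h5 : RHd (u.1 - z.1) = d := hd.symm
    linarith
  obtain ⟨w₃, hw₃box, hw₃not⟩ := Set.not_subset.mp hC
  have hw₃far : r < RHd (w₃.1 - u.1) := by
    by_contra hcon; push_neg at hcon
    exact hw₃not ⟨hpi, RHd_box.mpr hcon⟩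
  have hup : r ≤ d + n₁ := by
    have h4 := RHd_tri w₃.1 z.1 u.1
    have h3 := RHd_box.mp hw₃box
    have h5 : RHd (z.1 - u.1) = d := by rw [RHd_comm]
    linarith
  refine ⟨hpi, max_le (max_le hlow1 hlow2) hr0, hup, ?_⟩
  by_contra hcon
  push_neg at hcon
  have hrbig : 2*n₂ + n₁ + 3 < r := by linarith
  have hr1 : (1:ℝ) ≤ r := by linarith
  -- coordinates of p relative to u and z
  have hpure : |p.1.re - u.1.re| ≤ r := by
    have := le_trans (le_max_left _ _) hpbox'; rwa [Complex.sub_re] at this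
  have hpuim : |p.1.im - u.1.im| ≤ r := by
    have := le_trans (le_max_right _ _) hpbox'; rwa [Complex.sub_im] at this
  have hpzre : |p.1.re - z.1.re| ≤ n₁ + 1 := by
    have := le_trans (le_max_left _ _) hpz; rwa [Complex.sub_re] at this
  have hpzim : |p.1.im - z.1.im| ≤ n₁ + 1 := by
    have := le_trans (le_max_right _ _) hpz; rwa [Complex.sub_im] at this
  rw [abs_le] at hpure hpuim hpzre hpzim
  set B : ℝ := if p.1.im ≤ u.1.im then p.1.im else p.1.im - 1 with hB
  have hBprop : ∀ t : ℝ, B ≤ t → t < B + 1 → |t - z.1.im| ≤ n₁ + 2 ∧ |t - u.1.im| ≤ r := by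
    intro t ht1 ht2
    rw [abs_le, abs_le]
    rw [hB] at ht1 ht2
    split_ifs at ht1 ht2 with hcase
    · exact ⟨⟨by linarith, by linarith⟩, ⟨by linarith, by linarith⟩⟩
    · push_neg at hcase
      exact ⟨⟨by linarith, by linarith⟩, ⟨by linarith, by linarith⟩⟩
  by_cases hreC : p.1.re ≤ u.1.re
  · -- hole extends to the right: use strip re ∈ (z.re + 2n₂ - 1, z.re + 2n₂]
    obtain ⟨v, hv1, hv2, hv3, hv4, ⟨wp, hadjp, hwp⟩, -⟩ := RH_window_oc (z.1.re + 2*n₂ - 1) B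
    obtain ⟨hvzim, hvuim⟩ := hBprop v.1.im hv3 hv4
    rw [abs_le] at hvzim hvuim
    have hvmem : v ∈ holeAt x u ∩ innerBdry (BoxAt z (2 * n₂)) := by
      refine ⟨⟨hpi, ?_, ?_⟩, ⟨?_, ?_⟩, ⟨wp, ?_, hadjp⟩⟩
      · rw [Complex.sub_re, abs_le]; constructor <;> linarith
      · rw [Complex.sub_im, abs_le]; constructor <;> linarith
      · rw [Complex.sub_re, abs_le]; constructor <;> linarith
      · rw [Complex.sub_im, abs_le]; constructor <;> linarith
      · intro hmem
        obtain ⟨hmre, -⟩ := hmem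
        have h5 : (wp.1 - z.1).re = v.1.re + 1 - z.1.re := by
          rw [hwp]; simp [Complex.sub_re, Complex.add_re]
        rw [h5] at hmre
        have h6 := le_abs_self (v.1.re + 1 - z.1.re)
        linarith
    exact Set.eq_empty_iff_forall_notMem.mp hD v hvmem
  · push_neg at hreC
    obtain ⟨v, hv1, hv2, hv3, hv4, -, ⟨wm, hadjm, hwm⟩⟩ := RH_window_co (z.1.re - 2*n₂) B
    obtain ⟨hvzim, hvuim⟩ := hBprop v.1.im hv3 hv4
    rw [abs_le] at hvzim hvuim
    have hvmem : v ∈ holeAt x u ∩ innerBdry (BoxAt z (2 * n₂)) := by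
      refine ⟨⟨hpi, ?_, ?_⟩, ⟨?_, ?_⟩, ⟨wm, ?_, hadjm⟩⟩
      · rw [Complex.sub_re, abs_le]; constructor <;> linarith
      · rw [Complex.sub_im, abs_le]; constructor <;> linarith
      · rw [Complex.sub_re, abs_le]; constructor <;> linarith
      · rw [Complex.sub_im, abs_le]; constructor <;> linarith
      · intro hmem
        obtain ⟨hmre, -⟩ := hmem
        have h5 : (wm.1 - z.1).re = v.1.re - 1 - z.1.re := by
          rw [hwm]; simp [Complex.sub_re, Complex.one_re]
        rw [h5] at hmre
        have h6 := neg_abs_le (v.1.re - 1 - z.1.re)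
        linarith
    exact Set.eq_empty_iff_forall_notMem.mp hD v hvmem


lemma RH_meas (u : TriV) (t : ℝ) :
    MeasurableSet {x : ImpOmega | x.2.1 u = true ∧ x.2.2 u ≤ t} := by
  have h1 : Measurable fun x : ImpOmega => x.2.1 u :=
    (measurable_pi_apply u).comp (measurable_fst.comp measurable_snd)
  have h2 : Measurable fun x : ImpOmega => x.2.2 u :=
    (measurable_pi_apply u).comp (measurable_snd.comp measurable_snd)
  exact (h1 (measurableSet_singleton true)).inter (h2 measurableSet_Iic)

lemma RH_cyl {μ : Measure ImpOmega} {p : ℝ} {π : TriV → ℝ} {ρ : Measure ℝ}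
    (h : IsImpurityLaw μ p π ρ) (u : TriV) (t : ℝ) :
    μ {x : ImpOmega | x.2.1 u = true ∧ x.2.2 u ≤ t} = ENNReal.ofReal (π u) * ρ (Set.Iic t) := by
  have key := h.2.2 ∅ {u} {u} (fun _ => true) (fun _ => true) (fun _ => t)
  have hset : {x : ImpOmega |
      (∀ v ∈ (∅ : Finset TriV), x.1 v = (fun _ => true) v) ∧
      (∀ v ∈ ({u} : Finset TriV), x.2.1 v = (fun _ => true) v) ∧
      (∀ v ∈ ({u} : Finset TriV), x.2.2 v ≤ (fun _ => t) v)} =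
      {x : ImpOmega | x.2.1 u = true ∧ x.2.2 u ≤ t} := by
    ext x; simp
  rw [hset] at key
  rw [key]
  simp

lemma RH_window_bound {μ : Measure ImpOmega} {p : ℝ} {π : TriV → ℝ} {ρ : Measure ℝ}
    (h : IsImpurityLaw μ p π ρ) (u : TriV) (A B : ℝ) :
    μ {x : ImpOmega | x.2.1 u = true ∧ A ≤ x.2.2 u ∧ x.2.2 u ≤ B} ≤
      ENNReal.ofReal (π u) * ρ (Set.Icc A B) := by
  haveI := h.1
  haveI := h.2.1
  rcases lt_or_ge B A with hBA | hAB
  · have hempty : {x : ImpOmega | x.2.1 u = true ∧ A ≤ x.2.2 u ∧ x.2.2 u ≤ B} = ∅ := by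
      ext x; simp only [Set.mem_setOf_eq, Set.mem_empty_iff_false, iff_false]
      rintro ⟨-, h1, h2⟩; linarith
    rw [hempty]; simp
  · set E := {x : ImpOmega | x.2.1 u = true ∧ A ≤ x.2.2 u ∧ x.2.2 u ≤ B} with hE
    have key : ∀ n : ℕ, μ E + ENNReal.ofReal (π u) * ρ (Set.Iic (A - 1/((n:ℝ)+1))) ≤
        ENNReal.ofReal (π u) * ρ (Set.Iic B) := by
      intro n
      have hds : Disjoint E {x : ImpOmega | x.2.1 u = true ∧ x.2.2 u ≤ A - 1/((n:ℝ)+1)} := by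
        rw [Set.disjoint_left]
        rintro x ⟨-, hx1, -⟩ ⟨-, hx2⟩
        have hpos : (0:ℝ) < 1/((n:ℝ)+1) := by positivity
        linarith
      have hsub : E ∪ {x : ImpOmega | x.2.1 u = true ∧ x.2.2 u ≤ A - 1/((n:ℝ)+1)} ⊆
          {x : ImpOmega | x.2.1 u = true ∧ x.2.2 u ≤ B} := by
        rintro x (⟨hx0, -, hx2⟩ | ⟨hx0, hx2⟩)
        · exact ⟨hx0, hx2⟩
        · have hpos : (0:ℝ) < 1/((n:ℝ)+1) := by positivity
          exact ⟨hx0, by linarith⟩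
      calc μ E + ENNReal.ofReal (π u) * ρ (Set.Iic (A - 1/((n:ℝ)+1)))
          = μ E + μ {x : ImpOmega | x.2.1 u = true ∧ x.2.2 u ≤ A - 1/((n:ℝ)+1)} := by
            rw [RH_cyl h]
        _ = μ (E ∪ {x : ImpOmega | x.2.1 u = true ∧ x.2.2 u ≤ A - 1/((n:ℝ)+1)}) :=
            (measure_union hds (RH_meas u _)).symm
        _ ≤ μ {x : ImpOmega | x.2.1 u = true ∧ x.2.2 u ≤ B} := measure_mono hsub
        _ = ENNReal.ofReal (π u) * ρ (Set.Iic B) := RH_cyl h u B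
    have hsup : (⨆ n : ℕ, ρ (Set.Iic (A - 1/((n:ℝ)+1)))) = ρ (Set.Iio A) := by
      rw [← Directed.measure_iUnion]
      · congr 1
        ext t
        simp only [Set.mem_iUnion, Set.mem_Iic, Set.mem_Iio]
        constructor
        · rintro ⟨n, hn⟩
          have hpos : (0:ℝ) < 1/((n:ℝ)+1) := by positivity
          linarith
        · intro ht
          obtain ⟨n, hn⟩ := exists_nat_one_div_lt (by linarith : (0:ℝ) < A - t)
          exact ⟨n, by linarith⟩
      · apply Monotone.directed_le
        intro a b hab
        apply Set.Iic_subset_Iic.mpr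
        have h1 : ((a:ℝ)+1) ≤ ((b:ℝ)+1) := by
          have := (Nat.cast_le (α := ℝ)).mpr hab; linarith
        have h2 : 1/((b:ℝ)+1) ≤ 1/((a:ℝ)+1) := one_div_le_one_div_of_le (by positivity) h1
        linarith
    have step : μ E + ENNReal.ofReal (π u) * ρ (Set.Iio A) ≤ ENNReal.ofReal (π u) * ρ (Set.Iic B) := by
      rw [← hsup, ENNReal.mul_iSup, ENNReal.add_iSup]
      exact iSup_le key
    have hsplit : ρ (Set.Iic B) = ρ (Set.Icc A B) + ρ (Set.Iio A) := by
      rw [← measure_union _ measurableSet_Iio]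
      · congr 1
        ext t; simp only [Set.mem_Iic, Set.mem_union, Set.mem_Icc, Set.mem_Iio]
        constructor
        · intro ht; rcases lt_or_ge t A with h' | h'
          · exact Or.inr h'
          · exact Or.inl ⟨h', ht⟩
        · rintro (⟨-, ht⟩ | ht) <;> linarith
      · rw [Set.disjoint_left]; rintro t ⟨ht1, -⟩ ht2
        simp only [Set.mem_Iio] at ht2; linarith
    rw [hsplit, mul_add] at step
    have hfin : ENNReal.ofReal (π u) * ρ (Set.Iio A) ≠ ⊤ :=
      ENNReal.mul_ne_top ENNReal.ofReal_ne_top (measure_ne_top ρ _)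
    exact (ENNReal.add_le_add_iff_right hfin).mp step


lemma RH_card_le (Aa Bb : ℤ) (xx yy : ℝ) (hA : xx ≤ (Aa:ℝ)) (hB : (Bb:ℝ) ≤ yy)
    (h0 : 0 ≤ yy - xx + 1) : ((Finset.Icc Aa Bb).card : ℝ) ≤ yy - xx + 1 := by
  rw [Int.card_Icc]
  rcases le_or_gt (Bb + 1 - Aa) 0 with hle | hpos
  · rw [Int.toNat_of_nonpos hle]; simpa using h0
  · have h2 : (((Bb + 1 - Aa).toNat : ℕ) : ℝ) = ((Bb:ℝ) + 1 - (Aa:ℝ)) := by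
      have h3 : (((Bb + 1 - Aa).toNat : ℕ) : ℤ) = Bb + 1 - Aa := Int.toNat_of_nonneg hpos.le
      have h4 := congrArg (fun t : ℤ => (t : ℝ)) h3
      push_cast at h4 ⊢
      linarith
    rw [h2]; linarith

lemma RH_numeric (n₁ n₂ L l F1 F2 F3 : ℝ) (h1 : 1 ≤ n₁) (h12 : n₁ ≤ n₂/2) (hn2 : 2 ≤ n₂)
    (hW0 : 0 ≤ L - l) (hW : L - l ≤ 2*n₁+1) (hL0 : 0 ≤ L) (hL : L ≤ 2*n₂+2*n₁+4)
    (h0 : F3 ≤ F1 + F2) (hx : F1 ≤ (4*L+1)*(2*(L-l)+2)) (hy : F2 ≤ (4*(L-l)+2)*(2*L+1)) :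
    F3 ≤ 1000*n₁*n₂ := by
  have e1 : 4*L+1 ≤ 21*n₂ := by linarith
  have e2 : 2*(L-l)+2 ≤ 8*n₁ := by linarith
  have e3 : 4*(L-l)+2 ≤ 14*n₁ := by linarith
  have e4 : 2*L+1 ≤ 11*n₂ := by linarith
  have p1 : (4*L+1) * (2*(L-l)+2) ≤ (21*n₂) * (8*n₁) :=
    mul_le_mul e1 e2 (by linarith) (by linarith)
  have p2 : (4*(L-l)+2) * (2*L+1) ≤ (14*n₁) * (11*n₂) :=
    mul_le_mul e3 e4 (by linarith) (by linarith)
  nlinarith [mul_nonneg (by linarith : (0:ℝ) ≤ n₁) (by linarith : (0:ℝ) ≤ n₂)]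

lemma RH_tsum_card {α : Type*} (s : Set α) (hs : s.Finite) :
    ∑' u : α, Set.indicator s (fun _ => (1:ℝ≥0∞)) u = (hs.toFinset.card : ℝ≥0∞) := by
  rw [tsum_eq_sum (s := hs.toFinset)
    (fun u hu => Set.indicator_of_notMem (fun h => hu (hs.mem_toFinset.mpr h)) _)]
  rw [Finset.sum_congr rfl (fun u hu => Set.indicator_of_mem (hs.mem_toFinset.mp hu)
    (fun _ => (1:ℝ≥0∞)))]
  simp

lemma RH_count (z : TriV) (n₁ n₂ ℓ L : ℝ) (h1 : 1 ≤ n₁) (h12 : n₁ ≤ n₂/2)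
    (hw : L - ℓ ≤ 2*n₁ + 1) (hL : L ≤ 2*n₂ + 2*n₁ + 4) :
    ∑' u : TriV, (Set.indicator {u : TriV | ℓ ≤ RHd (u.1 - z.1) ∧ RHd (u.1 - z.1) ≤ L}
      (fun _ => (1:ℝ≥0∞)) u) ≤ ENNReal.ofReal (1000 * n₁ * n₂) := by
  have hn2 : 2 ≤ n₂ := by linarith
  set SS := {u : TriV | ℓ ≤ RHd (u.1 - z.1) ∧ RHd (u.1 - z.1) ≤ L} with hSS
  have hzero : ∀ u : TriV, u ∉ SS → Set.indicator SS (fun _ => (1:ℝ≥0∞)) u = 0 :=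
    fun u hu => Set.indicator_of_notMem hu _
  set ℓ' := max ℓ 0 with hℓ'
  by_cases hle : ℓ' ≤ L
  case neg =>
    have hSSe : SS = ∅ := by
      ext u; simp only [hSS, Set.mem_setOf_eq, Set.mem_empty_iff_false, iff_false, not_and]
      intro hu1 hu2
      have := RHd_nonneg (u.1 - z.1)
      apply hle
      apply max_le (le_trans hu1 hu2) (le_trans this hu2)
    rw [hSSe]
    simp
  case pos =>
  have hL0 : 0 ≤ L := le_trans (le_max_right _ _) hle
  have hl0 : 0 ≤ ℓ' := le_max_right _ _
  have hW0 : 0 ≤ L - ℓ' := by linarith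
  have hW : L - ℓ' ≤ 2*n₁ + 1 := by
    have : ℓ ≤ ℓ' := le_max_left _ _
    linarith
  have hsq3 : (0:ℝ) < Real.sqrt 3 := by positivity
  -- integer data
  set φ : TriV → ℤ × ℤ := fun u => (RHcx u - RHcx z, RHcy u - RHcy z) with hφ
  have hφinj : Function.Injective φ := by
    intro u w h
    have h1 : RHcx u - RHcx z = RHcx w - RHcx z := congrArg Prod.fst h
    have h2 : RHcy u - RHcy z = RHcy w - RHcy z := congrArg Prod.snd h
    exact RH_coords_inj (by
      have e1 : RHcx u = RHcx w := by omega
      have e2 : RHcy u = RHcy w := by omega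
      simp [e1, e2])
  have hXe : ∀ u : TriV, u.1.re - z.1.re = ((φ u).1 : ℝ) + ((φ u).2 : ℝ)/2 := by
    intro u
    rw [RH_coord_re u, RH_coord_re z]
    simp only [hφ]
    push_cast
    ring
  have hYe : ∀ u : TriV, u.1.im - z.1.im = ((φ u).2 : ℝ) * (Real.sqrt 3/2) := by
    intro u
    rw [RH_coord_im u, RH_coord_im z]
    simp only [hφ]
    push_cast
    ring
  -- finsets
  set BX : Finset ℤ := Finset.Icc (-⌊2*L⌋) ⌊2*L⌋ with hBX
  set IX : ℤ → Finset ℤ := fun b =>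
    Finset.Icc ⌈ℓ' - (b:ℝ)/2⌉ ⌊L - (b:ℝ)/2⌋ ∪ Finset.Icc ⌈-L - (b:ℝ)/2⌉ ⌊-ℓ' - (b:ℝ)/2⌋ with hIX
  set FX : Finset (ℤ×ℤ) := BX.biUnion (fun bb => (IX bb).image (fun aa => (aa, bb))) with hFX
  set BY : Finset ℤ := Finset.Icc ⌈2*ℓ'/Real.sqrt 3⌉ ⌊2*L/Real.sqrt 3⌋ ∪
    Finset.Icc ⌈-(2*L/Real.sqrt 3)⌉ ⌊-(2*ℓ'/Real.sqrt 3)⌋ with hBY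
  set IY : ℤ → Finset ℤ := fun b => Finset.Icc ⌈-L - (b:ℝ)/2⌉ ⌊L - (b:ℝ)/2⌋ with hIY
  set FY : Finset (ℤ×ℤ) := BY.biUnion (fun bb => (IY bb).image (fun aa => (aa, bb))) with hFY
  set F : Finset (ℤ×ℤ) := FX ∪ FY with hF
  -- membership
  have hmem : ∀ u ∈ SS, φ u ∈ F := by
    intro u hu
    obtain ⟨hu1, hu2⟩ := hu
    set a : ℤ := (φ u).1 with ha
    set b : ℤ := (φ u).2 with hb
    have hXb : |(a:ℝ) + (b:ℝ)/2| ≤ L := by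
      have h' : |(u.1 - z.1).re| ≤ L := le_trans (le_max_left _ _) hu2
      rw [Complex.sub_re, hXe u] at h'
      exact h'
    have hYb : |(b:ℝ)| * (Real.sqrt 3/2) ≤ L := by
      have h' : |(u.1 - z.1).im| ≤ L := le_trans (le_max_right _ _) hu2
      rw [Complex.sub_im, hYe u] at h'
      rwa [abs_mul, abs_of_pos (by positivity : (0:ℝ) < Real.sqrt 3/2)] at h'
    have habs : |(b:ℝ)| ≤ 2*L := by
      nlinarith [RH_one_le_sqrt3, abs_nonneg ((b:ℝ))]
    have hlb : ℓ' ≤ |(a:ℝ) + (b:ℝ)/2| ∨ ℓ' ≤ |(b:ℝ)| * (Real.sqrt 3/2) := by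
      have h0 : ℓ' ≤ RHd (u.1 - z.1) := max_le hu1 (RHd_nonneg _)
      unfold RHd at h0
      rw [Complex.sub_re, Complex.sub_im, hXe u, hYe u] at h0
      rw [abs_mul, abs_of_pos (by positivity : (0:ℝ) < Real.sqrt 3/2)] at h0
      exact le_max_iff.mp h0
    have hbBX : b ∈ BX := by
      rw [hBX, Finset.mem_Icc]
      constructor
      · rw [neg_le]
        apply Int.le_floor.mpr
        push_cast
        have := neg_abs_le ((b:ℝ))
        linarith
      · apply Int.le_floor.mpr
        have := le_abs_self ((b:ℝ))
        linarith
    have hprod : φ u = (a, b) := rfl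
    rcases hlb with hcase | hcase
    · -- X case
      apply Finset.mem_union_left
      rw [hFX, hprod]
      apply Finset.mem_biUnion.mpr
      refine ⟨b, hbBX, Finset.mem_image.mpr ⟨a, ?_, rfl⟩⟩
      rw [hIX]
      rcases le_or_gt 0 ((a:ℝ) + (b:ℝ)/2) with hsgn | hsgn
      · apply Finset.mem_union_left
        rw [abs_of_nonneg hsgn] at hcase hXb
        rw [Finset.mem_Icc]
        exact ⟨Int.ceil_le.mpr (by linarith), Int.le_floor.mpr (by linarith)⟩
      · apply Finset.mem_union_right
        rw [abs_of_neg hsgn] at hcase hXb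
        rw [Finset.mem_Icc]
        exact ⟨Int.ceil_le.mpr (by linarith), Int.le_floor.mpr (by linarith)⟩
    · -- Y case
      apply Finset.mem_union_right
      rw [hFY, hprod]
      apply Finset.mem_biUnion.mpr
      have hbBY : b ∈ BY := by
        rw [hBY]
        rcases le_or_gt 0 (b:ℝ) with hsgn | hsgn
        · apply Finset.mem_union_left
          rw [abs_of_nonneg hsgn] at hcase hYb
          rw [Finset.mem_Icc]
          constructor
          · apply Int.ceil_le.mpr
            rw [div_le_iff₀ hsq3]
            nlinarith
          · apply Int.le_floor.mpr
            rw [le_div_iff₀ hsq3]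
            nlinarith
        · apply Finset.mem_union_right
          rw [abs_of_neg hsgn] at hcase hYb
          rw [Finset.mem_Icc]
          constructor
          · apply Int.ceil_le.mpr
            push_cast
            rw [neg_le, le_div_iff₀ hsq3]
            nlinarith
          · apply Int.le_floor.mpr
            push_cast
            rw [le_neg, div_le_iff₀ hsq3]
            nlinarith
      refine ⟨b, hbBY, Finset.mem_image.mpr ⟨a, ?_, rfl⟩⟩
      rw [hIY]
      rw [Finset.mem_Icc]
      have h1 := abs_le.mp hXb
      exact ⟨Int.ceil_le.mpr (by linarith [h1.1]), Int.le_floor.mpr (by linarith [h1.2])⟩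
  -- finiteness and cardinality
  have hfin : SS.Finite := by
    apply Set.Finite.subset (Set.Finite.preimage (hφinj.injOn) (F.finite_toSet))
    intro u hu
    exact hmem u hu
  have hcard : hfin.toFinset.card ≤ F.card := by
    apply Finset.card_le_card_of_injOn φ
    · intro u hu
      exact hmem u (hfin.mem_toFinset.mp hu)
    · exact hφinj.injOn
  -- card bounds in ℝ
  have hIXcard : ∀ b : ℤ, ((IX b).card : ℝ) ≤ 2*(L - ℓ') + 2 := by
    intro b
    have hc1 : ((Finset.Icc ⌈ℓ' - (b:ℝ)/2⌉ ⌊L - (b:ℝ)/2⌋).card : ℝ) ≤ (L - (b:ℝ)/2) - (ℓ' - (b:ℝ)/2) + 1 :=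
      RH_card_le _ _ _ _ (Int.le_ceil _) (Int.floor_le _) (by linarith)
    have hc2 : ((Finset.Icc ⌈-L - (b:ℝ)/2⌉ ⌊-ℓ' - (b:ℝ)/2⌋).card : ℝ) ≤ (-ℓ' - (b:ℝ)/2) - (-L - (b:ℝ)/2) + 1 :=
      RH_card_le _ _ _ _ (Int.le_ceil _) (Int.floor_le _) (by linarith)
    have hc3 : ((IX b).card : ℕ) ≤ (Finset.Icc ⌈ℓ' - (b:ℝ)/2⌉ ⌊L - (b:ℝ)/2⌋).card +
        (Finset.Icc ⌈-L - (b:ℝ)/2⌉ ⌊-ℓ' - (b:ℝ)/2⌋).card := Finset.card_union_le _ _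
    have hc4 : ((IX b).card : ℝ) ≤ ((Finset.Icc ⌈ℓ' - (b:ℝ)/2⌉ ⌊L - (b:ℝ)/2⌋).card : ℝ) +
        ((Finset.Icc ⌈-L - (b:ℝ)/2⌉ ⌊-ℓ' - (b:ℝ)/2⌋).card : ℝ) := by exact_mod_cast hc3
    linarith
  have hBXcard : ((BX.card : ℕ) : ℝ) ≤ 4*L + 1 := by
    have := RH_card_le (-⌊2*L⌋) ⌊2*L⌋ (-(2*L)) (2*L)
      (by push_cast; linarith [Int.floor_le (2*L)]) (Int.floor_le _) (by linarith)
    rw [hBX]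
    linarith
  have hFXcard : ((FX.card : ℕ) : ℝ) ≤ (4*L+1) * (2*(L - ℓ') + 2) := by
    have hb1 : FX.card ≤ ∑ bb ∈ BX, ((IX bb).image (fun aa => (aa, bb))).card :=
      Finset.card_biUnion_le
    have hb2 : ∀ bb ∈ BX, (((IX bb).image (fun aa => (aa, bb))).card : ℝ) ≤ 2*(L - ℓ') + 2 := by
      intro bb _
      have := Finset.card_image_le (s := IX bb) (f := fun aa => (aa, bb))
      have h' : (((IX bb).image (fun aa => (aa, bb))).card : ℝ) ≤ ((IX bb).card : ℝ) := by
        exact_mod_cast this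
      linarith [hIXcard bb]
    have hb3 : (∑ bb ∈ BX, (((IX bb).image (fun aa => (aa, bb))).card : ℝ)) ≤
        BX.card • (2*(L - ℓ') + 2) := Finset.sum_le_card_nsmul _ _ _ hb2
    rw [nsmul_eq_mul] at hb3
    have hb4 : ((FX.card : ℕ) : ℝ) ≤ ∑ bb ∈ BX, (((IX bb).image (fun aa => (aa, bb))).card : ℝ) := by
      push_cast
      exact_mod_cast hb1
    have hb5 : (BX.card : ℝ) * (2*(L - ℓ') + 2) ≤ (4*L+1) * (2*(L - ℓ') + 2) := by
      apply mul_le_mul_of_nonneg_right hBXcard (by linarith)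
    linarith
  have hBYcard : ((BY.card : ℕ) : ℝ) ≤ 4*(L - ℓ') + 2 := by
    have hdd : 2*L/Real.sqrt 3 - 2*ℓ'/Real.sqrt 3 ≤ 2*(L - ℓ') := by
      have h' : (2*L - 2*ℓ')/Real.sqrt 3 ≤ 2*L - 2*ℓ' := div_le_self (by linarith) RH_one_le_sqrt3
      have h'' : 2*L/Real.sqrt 3 - 2*ℓ'/Real.sqrt 3 = (2*L - 2*ℓ')/Real.sqrt 3 := by ring
      linarith
    have hmono : 2*ℓ'/Real.sqrt 3 ≤ 2*L/Real.sqrt 3 := by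
      rw [div_le_div_iff₀ hsq3 hsq3]
      nlinarith [hsq3.le]
    have hc1 : ((Finset.Icc ⌈2*ℓ'/Real.sqrt 3⌉ ⌊2*L/Real.sqrt 3⌋).card : ℝ) ≤
        2*L/Real.sqrt 3 - 2*ℓ'/Real.sqrt 3 + 1 :=
      RH_card_le _ _ _ _ (Int.le_ceil _) (Int.floor_le _) (by linarith)
    have hc2 : ((Finset.Icc ⌈-(2*L/Real.sqrt 3)⌉ ⌊-(2*ℓ'/Real.sqrt 3)⌋).card : ℝ) ≤
        -(2*ℓ'/Real.sqrt 3) - (-(2*L/Real.sqrt 3)) + 1 :=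
      RH_card_le _ _ _ _ (Int.le_ceil _) (Int.floor_le _) (by linarith)
    have hc4 : ((Finset.Icc ⌈2*ℓ'/Real.sqrt 3⌉ ⌊2*L/Real.sqrt 3⌋ ∪
        Finset.Icc ⌈-(2*L/Real.sqrt 3)⌉ ⌊-(2*ℓ'/Real.sqrt 3)⌋).card : ℝ) ≤
        ((Finset.Icc ⌈2*ℓ'/Real.sqrt 3⌉ ⌊2*L/Real.sqrt 3⌋).card : ℝ) +
        ((Finset.Icc ⌈-(2*L/Real.sqrt 3)⌉ ⌊-(2*ℓ'/Real.sqrt 3)⌋).card : ℝ) := by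
      exact_mod_cast Finset.card_union_le _ _
    rw [hBY]
    linarith
  have hIYcard : ∀ b : ℤ, ((IY b).card : ℝ) ≤ 2*L + 1 := by
    intro b
    have h' := RH_card_le ⌈-L - (b:ℝ)/2⌉ ⌊L - (b:ℝ)/2⌋ (-L - (b:ℝ)/2) (L - (b:ℝ)/2)
      (Int.le_ceil _) (Int.floor_le _) (by linarith)
    rw [hIY]
    linarith
  have hFYcard : ((FY.card : ℕ) : ℝ) ≤ (4*(L - ℓ') + 2) * (2*L + 1) := by
    have hb1 : FY.card ≤ ∑ bb ∈ BY, ((IY bb).image (fun aa => (aa, bb))).card :=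
      Finset.card_biUnion_le
    have hb2 : ∀ bb ∈ BY, (((IY bb).image (fun aa => (aa, bb))).card : ℝ) ≤ 2*L + 1 := by
      intro bb _
      have h'' := Finset.card_image_le (s := IY bb) (f := fun aa => (aa, bb))
      have h' : (((IY bb).image (fun aa => (aa, bb))).card : ℝ) ≤ ((IY bb).card : ℝ) := by
        exact_mod_cast h''
      linarith [hIYcard bb]
    have hb3 : (∑ bb ∈ BY, (((IY bb).image (fun aa => (aa, bb))).card : ℝ)) ≤
        BY.card • (2*L + 1) := Finset.sum_le_card_nsmul _ _ _ hb2
    rw [nsmul_eq_mul] at hb3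
    have hb4 : ((FY.card : ℕ) : ℝ) ≤ ∑ bb ∈ BY, (((IY bb).image (fun aa => (aa, bb))).card : ℝ) := by
      push_cast
      exact_mod_cast hb1
    have hb5 : (BY.card : ℝ) * (2*L + 1) ≤ (4*(L - ℓ') + 2) * (2*L + 1) := by
      apply mul_le_mul_of_nonneg_right hBYcard (by linarith)
    linarith
  have hcardR : ((F.card : ℕ) : ℝ) ≤ 1000 * n₁ * n₂ := by
    have h0 : (F.card : ℕ) ≤ FX.card + FY.card := Finset.card_union_le _ _
    have h0' : ((F.card : ℕ) : ℝ) ≤ ((FX.card : ℕ) : ℝ) + ((FY.card : ℕ) : ℝ) := by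
      exact_mod_cast h0
    exact RH_numeric n₁ n₂ L ℓ' _ _ _ h1 h12 hn2 hW0 hW hL0 hL h0' hFXcard hFYcard
  have hcR : ((hfin.toFinset.card : ℕ) : ℝ) ≤ 1000*n₁*n₂ := by
    refine le_trans ?_ hcardR
    exact_mod_cast hcard
  rw [RH_tsum_card SS hfin, ← ENNReal.ofReal_natCast]
  exact ENNReal.ofReal_le_ofReal hcR



set_option maxHeartbeats 1000000 in
/-- **Lemma A.1 (restricted crossing holes).** Under the Assumption with constants
`c, γ`, there are `C, C' > 0` depending only on `c, γ` such that for all `m ≥ 1`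
and all annuli `A_{n₁,n₂}(z)` with `1 ≤ n₁ ≤ n₂/2`, the probability that some hole
crosses the annulus without containing `B_{n₁}(z)` and without reaching the inner
boundary of `B_{2n₂}(z)` is at most `C (υ(m)/m²) n₁ n₂^{γ-1} m^{2-γ} e^{-C' n₂/m}`. -/
theorem restricted_crossing_hole_bound
    (c γ : ℝ) (hc : 0 < c) (hγ : γ ∈ Set.Ioo (1:ℝ) 2) :
    ∃ C C' : ℝ, 0 < C ∧ 0 < C' ∧
      ∀ (π : ℕ → TriV → ℝ) (ρ : ℕ → Measure ℝ) (υ : ℕ → ℝ),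
        ImpurityAssumption c γ π ρ υ →
        ∀ m : ℕ, 1 ≤ m →
        ∀ (p : ℝ) (μ : Measure ImpOmega), IsImpurityLaw μ p (π m) (ρ m) →
        ∀ (z : TriV) (n₁ n₂ : ℝ), 1 ≤ n₁ → n₁ ≤ n₂ / 2 →
          μ {x | HoleCrossAnnRestr x z n₁ n₂} ≤
            ENNReal.ofReal (C * (υ m / (m : ℝ) ^ 2) * n₁ * n₂ ^ (γ - 1) *
              (m : ℝ) ^ (2 - γ) * Real.exp (-C' * n₂ / (m : ℝ))) := by
  obtain ⟨hγ1, hγ2⟩ := hγ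
  refine ⟨24000 * Real.exp c, c/4, by positivity, by positivity, ?_⟩
  intro π ρ υ hass m hm p μ hμ z n₁ n₂ hn1 hn12
  haveI := hμ.1
  haveI := hμ.2.1
  have hm1 : (1:ℝ) ≤ (m:ℝ) := by exact_mod_cast hm
  have hmpos : (0:ℝ) < (m:ℝ) := by linarith
  have hn2 : 2 ≤ n₂ := by linarith
  set d : TriV → ℝ := fun u => RHd (u.1 - z.1) with hdd
  set Au : TriV → ℝ := fun u => max (max (d u - n₁ - 1) (n₂ - 1 - d u)) 0 with hAu
  set Dm : ℝ := 2*n₂ + 2*n₁ + 4 with hDm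
  set r₀ : ℝ := max ((n₂ - n₁ - 2)/2) 0 with hr₀
  have hr₀0 : 0 ≤ r₀ := le_max_right _ _
  have hr₀n : n₂/4 - 1 ≤ r₀ := by
    rcases le_or_gt 0 ((n₂ - n₁ - 2)/2) with h | h
    · rw [hr₀, max_eq_left h]; linarith
    · rw [hr₀, max_eq_right h.le]; linarith
  have hr₀m : n₂/24 ≤ max r₀ 1 := by
    rcases le_or_gt 1 ((n₂ - n₁ - 2)/2) with h | h
    · have he : r₀ = (n₂ - n₁ - 2)/2 := by rw [hr₀]; exact max_eq_left (by linarith)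
      rw [max_eq_left (by rw [he]; linarith)]
      rw [he]; linarith
    · have h8 : n₂ < 8 := by linarith
      have h1' : (1:ℝ) ≤ max r₀ 1 := le_max_right _ _
      linarith
  -- the per-center events and radius windows
  set G : TriV → Set ImpOmega := fun u =>
    {x | d u ≤ Dm ∧ (x.2.1 u = true ∧ Au u ≤ x.2.2 u ∧ x.2.2 u ≤ d u + n₁)} with hG
  set T : TriV → Set ℝ := fun u => if d u ≤ Dm then Set.Icc (Au u) (d u + n₁) else ∅ with hT
  have hTmeas : ∀ u, MeasurableSet (T u) := by
    intro u
    simp only [hT]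
    by_cases hud : d u ≤ Dm
    · rw [if_pos hud]; exact measurableSet_Icc
    · rw [if_neg hud]; exact MeasurableSet.empty
  have hsub : {x : ImpOmega | HoleCrossAnnRestr x z n₁ n₂} ⊆ ⋃ u : TriV, G u := by
    rintro x ⟨u, hx1, hx2, hx3, hx4⟩
    apply Set.mem_iUnion.mpr
    obtain ⟨hind, hlow, hup, hdm⟩ := RH_hole_geom z u n₁ n₂ hn1 hn12 x hx1 hx2 hx3 hx4
    exact ⟨u, hdm, hind, hlow, hup⟩
  have hGle : ∀ u, μ (G u) ≤ ENNReal.ofReal (π m u) * ρ m (T u) := by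
    intro u
    by_cases hud : d u ≤ Dm
    · have hGeq : G u = {x : ImpOmega | x.2.1 u = true ∧ Au u ≤ x.2.2 u ∧ x.2.2 u ≤ d u + n₁} := by
        rw [hG]; ext x; simp [hud]
      rw [hGeq]
      simp only [hT, if_pos hud]
      exact RH_window_bound hμ u (Au u) (d u + n₁)
    · have hGeq : G u = ∅ := by
        rw [hG]; ext x; simp [hud]
      rw [hGeq]
      simp
  set Pi0 : ℝ≥0∞ := ⨆ u : TriV, ENNReal.ofReal (π m u) with hPi0
  -- pointwise count bound
  have hpoint : ∀ t : ℝ, (∑' u : TriV, Set.indicator (T u) (fun _ => (1:ℝ≥0∞)) t) ≤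
      Set.indicator (Set.Ici r₀) (fun _ => ENNReal.ofReal (1000*n₁*n₂)) t := by
    intro t
    by_cases hts : t ∈ Set.Ici r₀
    · rw [Set.indicator_of_mem hts]
      have hcomp : ∀ u : TriV, Set.indicator (T u) (fun _ => (1:ℝ≥0∞)) t ≤
          Set.indicator {u : TriV | t - n₁ ≤ RHd (u.1 - z.1) ∧ RHd (u.1 - z.1) ≤ min (t + n₁ + 1) Dm}
            (fun _ => (1:ℝ≥0∞)) u := by
        intro u
        by_cases htu : t ∈ T u
        · rw [Set.indicator_of_mem htu]
          have humem : u ∈ {u : TriV | t - n₁ ≤ RHd (u.1 - z.1) ∧ RHd (u.1 - z.1) ≤ min (t + n₁ + 1) Dm} := by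
            simp only [hT] at htu
            by_cases hud : d u ≤ Dm
            · rw [if_pos hud] at htu
              obtain ⟨ht1, ht2⟩ := htu
              have hA1 : d u - n₁ - 1 ≤ Au u := le_trans (le_max_left _ _) (le_max_left _ _)
              constructor
              · show t - n₁ ≤ d u
                linarith
              · show d u ≤ min (t + n₁ + 1) Dm
                exact le_min (by linarith) hud
            · rw [if_neg hud] at htu
              exact absurd htu (Set.notMem_empty t)
          rw [Set.indicator_of_mem humem]
        · rw [Set.indicator_of_notMem htu]
          exact zero_le
      refine le_trans (ENNReal.tsum_le_tsum hcomp) ?_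
      apply RH_count z n₁ n₂ (t - n₁) (min (t + n₁ + 1) Dm) hn1 hn12
      · have := min_le_left (t + n₁ + 1) Dm
        linarith
      · rw [hDm] at *
        exact min_le_right _ _
    · rw [Set.indicator_of_notMem hts]
      have hzero : ∀ u : TriV, Set.indicator (T u) (fun _ => (1:ℝ≥0∞)) t = 0 := by
        intro u
        apply Set.indicator_of_notMem
        intro htu
        simp only [hT] at htu
        by_cases hud : d u ≤ Dm
        · rw [if_pos hud] at htu
          obtain ⟨ht1, -⟩ := htu
          apply hts
          have havg : (n₂ - n₁ - 2)/2 ≤ max (d u - n₁ - 1) (n₂ - 1 - d u) := by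
            rcases le_total (d u - n₁ - 1) (n₂ - 1 - d u) with h | h
            · rw [max_eq_right h]; linarith
            · rw [max_eq_left h]; linarith
          have hA0 : r₀ ≤ Au u := by
            simp only [hr₀, hAu]
            exact max_le (le_trans havg (le_max_left _ _)) (le_max_right _ _)
          exact le_trans hA0 ht1
        · rw [if_neg hud] at htu
          exact htu
      rw [tsum_congr hzero, tsum_zero]
  have hsum : (∑' u : TriV, ρ m (T u)) ≤ ENNReal.ofReal (1000*n₁*n₂) * ρ m (Set.Ici r₀) := by
    calc (∑' u : TriV, ρ m (T u))
        = ∑' u : TriV, ∫⁻ t, Set.indicator (T u) (fun _ => (1:ℝ≥0∞)) t ∂(ρ m) :=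
          tsum_congr (fun u => (MeasureTheory.lintegral_indicator_one (hTmeas u)).symm)
      _ = ∫⁻ t, (∑' u : TriV, Set.indicator (T u) (fun _ => (1:ℝ≥0∞)) t) ∂(ρ m) :=
          (MeasureTheory.lintegral_tsum (fun u => (measurable_const.indicator (hTmeas u)).aemeasurable)).symm
      _ ≤ ∫⁻ t, Set.indicator (Set.Ici r₀) (fun _ => ENNReal.ofReal (1000*n₁*n₂)) t ∂(ρ m) :=
          MeasureTheory.lintegral_mono hpoint
      _ = ENNReal.ofReal (1000*n₁*n₂) * ρ m (Set.Ici r₀) :=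
          MeasureTheory.lintegral_indicator_const measurableSet_Ici _
  have hPtail : Pi0 * ρ m (Set.Ici r₀) ≤
      ENNReal.ofReal (υ m / (m:ℝ)^2 * (max r₀ 1 / m)^(γ-2) * Real.exp (-c * r₀ / m)) := by
    rw [hPi0, ENNReal.iSup_mul]
    apply iSup_le
    intro u
    rcases le_or_gt (π m u) 0 with hπ | hπ
    · rw [ENNReal.ofReal_of_nonpos hπ]
      simp
    · have hA := hass m hm r₀ hr₀0 u
      rw [← ENNReal.ofReal_toReal (measure_ne_top (ρ m) (Set.Ici r₀)),
        ← ENNReal.ofReal_mul hπ.le]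
      exact ENNReal.ofReal_le_ofReal hA
  -- final numeric bound
  have hfinal : ENNReal.ofReal (1000*n₁*n₂) *
      ENNReal.ofReal (υ m / (m:ℝ)^2 * (max r₀ 1 / m)^(γ-2) * Real.exp (-c * r₀ / m)) ≤
      ENNReal.ofReal (24000 * Real.exp c * (υ m / (m : ℝ) ^ 2) * n₁ * n₂ ^ (γ - 1) *
        (m : ℝ) ^ (2 - γ) * Real.exp (-(c/4) * n₂ / (m : ℝ))) := by
    rw [← ENNReal.ofReal_mul (by positivity)]
    rcases le_or_gt (υ m) 0 with hυ | hυ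
    · have hnp : 1000*n₁*n₂ * (υ m / (m:ℝ)^2 * (max r₀ 1 / m)^(γ-2) * Real.exp (-c * r₀ / m)) ≤ 0 := by
        apply mul_nonpos_of_nonneg_of_nonpos (by positivity)
        apply mul_nonpos_of_nonpos_of_nonneg ?_ (Real.exp_nonneg _)
        apply mul_nonpos_of_nonpos_of_nonneg ?_ (by positivity)
        apply div_nonpos_of_nonpos_of_nonneg hυ (by positivity)
      rw [ENNReal.ofReal_of_nonpos hnp]
      exact zero_le
    · apply ENNReal.ofReal_le_ofReal
      have hmx : (0:ℝ) < max r₀ 1 := lt_of_lt_of_le one_pos (le_max_right _ _)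
      have hb1 : (max r₀ 1 / (m:ℝ))^(γ-2) ≤ 24 * n₂^(γ-2) * (m:ℝ)^(2-γ) := by
        have hbase : n₂/(24*(m:ℝ)) ≤ max r₀ 1 / (m:ℝ) := by
          rw [div_le_div_iff₀ (by positivity) hmpos]
          nlinarith [hr₀m, hmpos.le]
        have hstep1 : (max r₀ 1 / (m:ℝ))^(γ-2) ≤ (n₂/(24*(m:ℝ)))^(γ-2) :=
          Real.rpow_le_rpow_of_nonpos (by positivity) hbase (by linarith)
        have hstep2 : (n₂/(24*(m:ℝ)))^(γ-2) = n₂^(γ-2) * ((24*(m:ℝ))^(2-γ)) := by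
          rw [Real.div_rpow (by linarith) (by positivity)]
          rw [show (2-γ) = -(γ-2) by ring, Real.rpow_neg (by positivity)]
          rw [div_eq_mul_inv]
        have hstep3 : ((24:ℝ)*(m:ℝ))^(2-γ) = (24:ℝ)^(2-γ) * (m:ℝ)^(2-γ) :=
          Real.mul_rpow (by norm_num) hmpos.le
        have hstep4 : (24:ℝ)^(2-γ) ≤ 24 := by
          calc (24:ℝ)^(2-γ) ≤ (24:ℝ)^(1:ℝ) :=
            Real.rpow_le_rpow_of_exponent_le (by norm_num) (by linarith)
          _ = 24 := Real.rpow_one _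
        calc (max r₀ 1 / (m:ℝ))^(γ-2) ≤ n₂^(γ-2) * ((24:ℝ)^(2-γ) * (m:ℝ)^(2-γ)) := by
              rw [← hstep3, ← hstep2]; exact hstep1
        _ ≤ 24 * n₂^(γ-2) * (m:ℝ)^(2-γ) := by
              have h1 : (0:ℝ) ≤ n₂^(γ-2) := by positivity
              have h2 : (0:ℝ) ≤ (m:ℝ)^(2-γ) := by positivity
              nlinarith [hstep4, mul_nonneg h1 h2]
      have hb2 : Real.exp (-c * r₀ / m) ≤ Real.exp c * Real.exp (-(c/4) * n₂ / m) := by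
        rw [← Real.exp_add]
        apply Real.exp_le_exp.mpr
        have h1 : c + -(c/4) * n₂ / m = (c * m + -(c/4) * n₂) / m := by
          field_simp
        rw [h1, div_le_div_iff₀ hmpos hmpos]
        have hkey : 0 ≤ c * m + -(c/4) * n₂ + c * r₀ := by
          nlinarith [mul_le_mul_of_nonneg_left hr₀n hc.le]
        nlinarith [mul_le_mul_of_nonneg_right hkey hmpos.le]
      have hpow : n₂ * n₂^(γ-2) = n₂^(γ-1) := by
        rw [show γ-1 = (γ-2)+1 by ring, Real.rpow_add (by linarith : (0:ℝ) < n₂), Real.rpow_one]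
        ring
      have hchain : 1000*n₁*n₂ * (υ m / (m:ℝ)^2 * (max r₀ 1 / m)^(γ-2) * Real.exp (-c * r₀ / m)) ≤
          1000*n₁*n₂ * (υ m / (m:ℝ)^2 * (24 * n₂^(γ-2) * (m:ℝ)^(2-γ)) *
            (Real.exp c * Real.exp (-(c/4) * n₂ / m))) := by
        have hq : (0:ℝ) ≤ υ m / (m:ℝ)^2 := by positivity
        gcongr <;> positivity
      refine le_trans hchain (le_of_eq ?_)
      rw [← hpow]
      ring
  -- assemble
  calc μ {x | HoleCrossAnnRestr x z n₁ n₂}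
      ≤ μ (⋃ u : TriV, G u) := measure_mono hsub
    _ ≤ ∑' u : TriV, μ (G u) := measure_iUnion_le _
    _ ≤ ∑' u : TriV, ENNReal.ofReal (π m u) * ρ m (T u) := ENNReal.tsum_le_tsum hGle
    _ ≤ ∑' u : TriV, Pi0 * ρ m (T u) := by
        apply ENNReal.tsum_le_tsum
        intro u
        have hPile : ENNReal.ofReal (π m u) ≤ Pi0 := by
          rw [hPi0]; exact le_iSup (fun u' => ENNReal.ofReal (π m u')) u
        exact mul_le_mul_left hPile _
    _ = Pi0 * ∑' u : TriV, ρ m (T u) := ENNReal.tsum_mul_left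
    _ ≤ Pi0 * (ENNReal.ofReal (1000*n₁*n₂) * ρ m (Set.Ici r₀)) := mul_le_mul_right hsum _
    _ = ENNReal.ofReal (1000*n₁*n₂) * (Pi0 * ρ m (Set.Ici r₀)) := by ring
    _ ≤ ENNReal.ofReal (1000*n₁*n₂) *
        ENNReal.ofReal (υ m / (m:ℝ)^2 * (max r₀ 1 / m)^(γ-2) * Real.exp (-c * r₀ / m)) :=
        mul_le_mul_right hPtail _
    _ ≤ ENNReal.ofReal (24000 * Real.exp c * (υ m / (m : ℝ) ^ 2) * n₁ * n₂ ^ (γ - 1) *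
        (m : ℝ) ^ (2 - γ) * Real.exp (-(c/4) * n₂ / (m : ℝ))) := hfinal


end
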